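/- A prism on n ≥ 6 vertices (the Cartesian product of K2 with a cycle C_{n/2}) has a C4-quotient 2-factor if and only if n is divisible by 4. -/

import Mathlib

/-- The possible "ends" of an edge in a pregraph: an ordinary edge (or loop)
with two endpoints, or a semi-edge with a single endpoint. -/
inductive PEnds (V : Type) where
  | edge : V → V → PEnds V
  | semi : V → PEnds V
  deriving DecidableEq

/-- A finite pregraph: a multigraph that may contain loops, parallel edges and
semi-edges.  Edges are abstract and carry their endpoints via `ends`. -/
structure Pregraph where
  V : Type
  E : Type
  [fintypeV : Fintype V]
  [decEqV : DecidableEq V]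
  [fintypeE : Fintype E]
  [decEqE : DecidableEq E]
  ends : E → PEnds V

attribute [instance] Pregraph.fintypeV Pregraph.decEqV Pregraph.fintypeE Pregraph.decEqE

namespace Pregraph

/-- The number of end-points that edge `e` has at the vertex `v`
(a loop at `v` counts twice, a semi-edge once). -/
def endCount (P : Pregraph) (v : P.V) (e : P.E) : ℕ :=
  match P.ends e with
  | .edge a b => (if a = v then 1 else 0) + (if b = v then 1 else 0)
  | .semi a => if a = v then 1 else 0

/-- The degree of a vertex: loops count 2, semi-edges count 1. -/
def degree (P : Pregraph) (v : P.V) : ℕ := ∑ e : P.E, P.endCount v e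

open Classical in
/-- The degree of a vertex inside a set `F` of edges. -/
noncomputable def degIn (P : Pregraph) (F : Set P.E) (v : P.V) : ℕ :=
  ∑ e : P.E, if e ∈ F then P.endCount v e else 0

/-- `e` is a proper edge with endpoints `a` and `b`. -/
def joins (P : Pregraph) (e : P.E) (a b : P.V) : Prop :=
  P.ends e = .edge a b ∨ P.ends e = .edge b a

/-- The edge `e` is incident to the vertex `v`. -/
def incident (P : Pregraph) (e : P.E) (v : P.V) : Prop :=
  match P.ends e with
  | .edge a b => a = v ∨ b = v
  | .semi a => a = v

/-- Adjacency via a proper edge. -/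
def Adj (P : Pregraph) (u w : P.V) : Prop := ∃ e, P.joins e u w

/-- Connectedness of a pregraph. -/
def Connected (P : Pregraph) : Prop := ∀ u w : P.V, Relation.ReflTransGen P.Adj u w

/-- A cubic pregraph: connected and every vertex has degree 3. -/
def Cubic (P : Pregraph) : Prop := P.Connected ∧ ∀ v, P.degree v = 3

/-- The edge `e` has at least one endpoint in the vertex set `C`. -/
def touches (P : Pregraph) (e : P.E) (C : Set P.V) : Prop :=
  match P.ends e with
  | .edge a b => a ∈ C ∨ b ∈ C
  | .semi a => a ∈ C

/-- `C` is a component of the edge set `F` of type `q₁` : a 4-cycle. -/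
def IsQ1Comp (P : Pregraph) (F : Set P.E) (C : Set P.V) : Prop :=
  ∃ a b c d : P.V, a ≠ b ∧ a ≠ c ∧ a ≠ d ∧ b ≠ c ∧ b ≠ d ∧ c ≠ d ∧
    C = {a, b, c, d} ∧
    ∃ e1 e2 e3 e4 : P.E, e1 ≠ e2 ∧ e1 ≠ e3 ∧ e1 ≠ e4 ∧ e2 ≠ e3 ∧ e2 ≠ e4 ∧ e3 ≠ e4 ∧
      {e ∈ F | P.touches e C} = {e1, e2, e3, e4} ∧
      P.joins e1 a b ∧ P.joins e2 b c ∧ P.joins e3 c d ∧ P.joins e4 d a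

/-- `C` is a component of the edge set `F` of type `q₂` : a digon. -/
def IsQ2Comp (P : Pregraph) (F : Set P.E) (C : Set P.V) : Prop :=
  ∃ a b : P.V, a ≠ b ∧ C = {a, b} ∧
    ∃ e1 e2 : P.E, e1 ≠ e2 ∧ {e ∈ F | P.touches e C} = {e1, e2} ∧
      P.joins e1 a b ∧ P.joins e2 a b

/-- `C` is a component of the edge set `F` of type `q₃` : an edge together with
a semi-edge at each endpoint. -/
def IsQ3Comp (P : Pregraph) (F : Set P.E) (C : Set P.V) : Prop :=
  ∃ a b : P.V, a ≠ b ∧ C = {a, b} ∧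
    ∃ e1 e2 e3 : P.E, e1 ≠ e2 ∧ e1 ≠ e3 ∧ e2 ≠ e3 ∧
      {e ∈ F | P.touches e C} = {e1, e2, e3} ∧
      P.joins e1 a b ∧ P.ends e2 = .semi a ∧ P.ends e3 = .semi b

/-- `C` is a component of the edge set `F` of type `q₄` : a single vertex with
two semi-edges. -/
def IsQ4Comp (P : Pregraph) (F : Set P.E) (C : Set P.V) : Prop :=
  ∃ a : P.V, C = {a} ∧
    ∃ e1 e2 : P.E, e1 ≠ e2 ∧ {e ∈ F | P.touches e C} = {e1, e2} ∧
      P.ends e1 = .semi a ∧ P.ends e2 = .semi a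

/-- `C` is a component of `F` which is a quotient of `C₄`. -/
def IsCQComp (P : Pregraph) (F : Set P.E) (C : Set P.V) : Prop :=
  P.IsQ1Comp F C ∨ P.IsQ2Comp F C ∨ P.IsQ3Comp F C ∨ P.IsQ4Comp F C

/-- `F` is a `C₄`-quotient 2-factor with component partition `Ps`. -/
def IsCQFactorWith (P : Pregraph) (F : Set P.E) (Ps : Set (Set P.V)) : Prop :=
  (∀ C ∈ Ps, P.IsCQComp F C) ∧
  (∀ v : P.V, ∃ C ∈ Ps, v ∈ C) ∧
  (∀ C ∈ Ps, ∀ D ∈ Ps, C ≠ D → Disjoint C D)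

/-- `F` is a `C₄`-quotient 2-factor: a spanning subgraph in which every vertex has
degree 2 and every component is a quotient of `C₄`. -/
def IsCQFactor (P : Pregraph) (F : Set P.E) : Prop := ∃ Ps, P.IsCQFactorWith F Ps

/-- The pregraph has a `C₄`-quotient 2-factor. -/
def HasCQFactor (P : Pregraph) : Prop := ∃ F, P.IsCQFactor F

/-- Compatibility of ends under a vertex map (edges are unordered). -/
def endsRel {V W : Type} (σ : V → W) : PEnds V → PEnds W → Prop
  | .edge a b, x => x = .edge (σ a) (σ b) ∨ x = .edge (σ b) (σ a)
  | .semi a, x => x = .semi (σ a)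

/-- An isomorphism of pregraphs. -/
structure Iso (P Q : Pregraph) where
  vmap : P.V ≃ Q.V
  emap : P.E ≃ Q.E
  compat : ∀ e, endsRel vmap (P.ends e) (Q.ends (emap e))

/-- Two edge sets (e.g. two 2-factors) of `P` are isomorphic if some automorphism
of `P` maps one onto the other. -/
def FactorIso (P : Pregraph) (F1 F2 : Set P.E) : Prop :=
  ∃ φ : Iso P P, ∀ e, e ∈ F1 ↔ φ.emap e ∈ F2

/-- Adjacency in the ladder graph `K₂ × Pₙ` on `Fin n × Fin 2`. -/
def ladderAdj (n : ℕ) (p q : Fin n × Fin 2) : Prop :=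
  (p.1 = q.1 ∧ p.2 ≠ q.2) ∨ (p.2 = q.2 ∧ ((p.1 : ℕ) + 1 = q.1 ∨ (q.1 : ℕ) + 1 = p.1))

/-- The subgraph of `P` with vertex set `S` and edge set `F` is isomorphic to the
ladder `K₂ × Pₙ` for some `n ≥ 2`. -/
def IsLadder (P : Pregraph) (S : Set P.V) (F : Set P.E) : Prop :=
  ∃ n : ℕ, 2 ≤ n ∧ ∃ f : Fin n × Fin 2 → P.V, Function.Injective f ∧
    S = Set.range f ∧
    (∀ e ∈ F, ∃ p q, ladderAdj n p q ∧ P.joins e (f p) (f q)) ∧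
    (∀ p q, ladderAdj n p q → ∃! e, e ∈ F ∧ P.joins e (f p) (f q))

/-- A ladder of `P`: a maximal subgraph isomorphic to `K₂ × Pₙ`, `n ≥ 2`. -/
def IsMaxLadder (P : Pregraph) (S : Set P.V) (F : Set P.E) : Prop :=
  P.IsLadder S F ∧
  ∀ S' F', P.IsLadder S' F' → S ⊆ S' → F ⊆ F' → S = S' ∧ F = F'

/-- A digon: two distinct vertices joined by two parallel edges. -/
def IsDigonPair (P : Pregraph) (a b : P.V) : Prop :=
  a ≠ b ∧ ∃ e1 e2 : P.E, e1 ≠ e2 ∧ P.joins e1 a b ∧ P.joins e2 a b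

end Pregraph

/-- The prism over `Cₘ`: the Cartesian product of `K₂` and the cycle `Cₘ`, on
`2 * m` vertices.  `Sum.inl (i, j)` is the rail edge from `(i, j)` to `(i+1, j)`,
`Sum.inr i` is the rung edge from `(i, 0)` to `(i, 1)`. -/
def prism (m : ℕ) : Pregraph where
  V := Fin m × Fin 2
  E := (Fin m × Fin 2) ⊕ Fin m
  ends := fun e =>
    match e with
    | .inl p => .edge p (⟨(p.1.1 + 1) % m, Nat.mod_lt _ (by have := p.1.2; omega)⟩, p.2)
    | .inr i => .edge (i, 0) (i, 1)

namespace Pregraph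

lemma touches_iff (P : Pregraph) (e : P.E) (a b : P.V) (C : Set P.V)
    (h : P.ends e = .edge a b) : P.touches e C ↔ a ∈ C ∨ b ∈ C := by
  simp [Pregraph.touches, h]

lemma joins_iff (P : Pregraph) (e : P.E) (a b x y : P.V)
    (h : P.ends e = .edge a b) :
    P.joins e x y ↔ (a = x ∧ b = y) ∨ (a = y ∧ b = x) := by
  simp [Pregraph.joins, h, PEnds.edge.injEq]


end Pregraph

lemma prism_ends_inl (m : ℕ) (p : Fin m × Fin 2) :
    (prism m).ends (Sum.inl p) =
      .edge p (⟨(p.1.1 + 1) % m, Nat.mod_lt _ (by have := p.1.2; omega)⟩, p.2) := rfl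

lemma prism_ends_inr (m : ℕ) (i : Fin m) :
    (prism m).ends (Sum.inr i) = .edge (i, 0) (i, 1) := rfl

lemma mod_succ_cases (x m : ℕ) (hx : x < m) :
    ((x+1) % m = x+1 ∧ x+1 < m) ∨ ((x+1) % m = 0 ∧ x+1 = m) := by
  rcases Nat.lt_or_ge (x+1) m with h | h
  · exact Or.inl ⟨Nat.mod_eq_of_lt h, h⟩
  · have : x + 1 = m := by omega
    exact Or.inr ⟨by rw [this, Nat.mod_self], this⟩
/-- successor vertex index -/
def psucc (m : ℕ) (p : Fin m × Fin 2) : Fin m × Fin 2 :=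
  (⟨(p.1.1 + 1) % m, Nat.mod_lt _ (by have := p.1.2; omega)⟩, p.2)

lemma prism_joins_inl (m : ℕ) (p x y : Fin m × Fin 2) :
    (prism m).joins (Sum.inl p) x y ↔
      (p = x ∧ psucc m p = y) ∨ (p = y ∧ psucc m p = x) :=
  Pregraph.joins_iff _ _ _ _ _ _ (prism_ends_inl m p)

lemma prism_joins_inr (m : ℕ) (i : Fin m) (x y : Fin m × Fin 2) :
    (prism m).joins (Sum.inr i) x y ↔
      ((i, 0) = x ∧ (i, 1) = y) ∨ ((i, 0) = y ∧ (i, 1) = x) :=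
  Pregraph.joins_iff _ _ _ _ _ _ (prism_ends_inr m i)

lemma prism_touches_inl (m : ℕ) (p : Fin m × Fin 2) (C : Set (Fin m × Fin 2)) :
    (prism m).touches (Sum.inl p) C ↔ p ∈ C ∨ psucc m p ∈ C :=
  Pregraph.touches_iff _ _ _ _ _ (prism_ends_inl m p)

lemma prism_touches_inr (m : ℕ) (i : Fin m) (C : Set (Fin m × Fin 2)) :
    (prism m).touches (Sum.inr i) C ↔ (i, 0) ∈ C ∨ (i, 1) ∈ C :=
  Pregraph.touches_iff _ _ _ _ _ (prism_ends_inr m i)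

lemma psucc_fst (m : ℕ) (p : Fin m × Fin 2) : ((psucc m p).1 : ℕ) = (p.1.1 + 1) % m := rfl
lemma psucc_snd (m : ℕ) (p : Fin m × Fin 2) : (psucc m p).2 = p.2 := rfl

lemma prism_no_semi (m : ℕ) (e : (prism m).E) (a : (prism m).V) :
    (prism m).ends e ≠ .semi a := by
  rcases e with p | i <;> simp [prism]

lemma prism_no_parallel (m : ℕ) (hm : 3 ≤ m) {e1 e2 : (prism m).E}
    {a b : Fin m × Fin 2} (hab : a ≠ b)
    (h1 : (prism m).joins e1 a b) (h2 : (prism m).joins e2 a b) : e1 = e2 := by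
  have hab' : (a.1 : ℕ) ≠ b.1 ∨ (a.2 : ℕ) ≠ b.2 := by
    by_contra h; push_neg at h
    exact hab (Prod.ext (Fin.ext h.1) (Fin.ext h.2))
  rcases e1 with p | i <;> rcases e2 with q | j
  · rw [prism_joins_inl] at h1 h2
    have hp := mod_succ_cases p.1.1 m p.1.2
    have hq := mod_succ_cases q.1.1 m q.1.2
    simp only [Prod.ext_iff, Fin.ext_iff, psucc_fst, psucc_snd] at h1 h2
    exact congrArg Sum.inl (Prod.ext (Fin.ext (by omega)) (Fin.ext (by omega)))
  · rw [prism_joins_inl] at h1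
    rw [prism_joins_inr] at h2
    simp only [Prod.ext_iff, Fin.ext_iff, psucc_fst, psucc_snd,
      Fin.val_zero, Fin.val_one] at h1 h2
    omega
  · rw [prism_joins_inr] at h1
    rw [prism_joins_inl] at h2
    simp only [Prod.ext_iff, Fin.ext_iff, psucc_fst, psucc_snd,
      Fin.val_zero, Fin.val_one] at h1 h2
    omega
  · rw [prism_joins_inr] at h1 h2
    simp only [Prod.ext_iff, Fin.ext_iff,
      Fin.val_zero, Fin.val_one] at h1 h2
    exact congrArg Sum.inr (Fin.ext (by omega))
lemma prism_factor_dvd (m : ℕ) (hm : 3 ≤ m) (h : (prism m).HasCQFactor) :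
    4 ∣ 2 * m := by
  classical
  obtain ⟨F, Ps, hcomp, hcover, hdisj⟩ := h
  -- every component is a 4-cycle
  have hQ1 : ∀ C ∈ Ps, (prism m).IsQ1Comp F C := by
    intro C hC
    rcases hcomp C hC with h1 | h2 | h3 | h4
    · exact h1
    · obtain ⟨a, b, hab, -, e1, e2, hne, -, hj1, hj2⟩ := h2
      exact absurd (prism_no_parallel m hm hab hj1 hj2) hne
    · obtain ⟨a, b, -, -, e1, e2, e3, -, -, -, -, -, hs, -⟩ := h3
      exact absurd hs (prism_no_semi m e2 a)
    · obtain ⟨a, -, e1, e2, -, -, hs, -⟩ := h4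
      exact absurd hs (prism_no_semi m e1 a)
  have hcard4 : ∀ C ∈ Ps, C.ncard = 4 := by
    intro C hC
    obtain ⟨a, b, c, d, hab, hac, had, hbc, hbd, hcd, hCeq, -⟩ := hQ1 C hC
    subst hCeq
    rw [Set.ncard_insert_of_notMem (by simp [hab, hac, had]),
      Set.ncard_insert_of_notMem (by simp [hbc, hbd]), Set.ncard_pair hcd]
  -- sum over components
  have hPsfin : Ps.Finite := Set.toFinite Ps
  set T : Finset (Set ((prism m).V)) := hPsfin.toFinset with hT
  have hU : (Finset.univ : Finset ((prism m).V)) =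
      T.biUnion (fun C => (Set.toFinite C).toFinset) := by
    ext v
    simp only [Finset.mem_univ, true_iff, Finset.mem_biUnion, Set.Finite.mem_toFinset, hT]
    obtain ⟨C, hC, hv⟩ := hcover v
    exact ⟨C, hC, hv⟩
  have hdisjT : ∀ C ∈ T, ∀ D ∈ T, C ≠ D →
      Disjoint (Set.toFinite C).toFinset (Set.toFinite D).toFinset := by
    intro C hC D hD hne
    rw [Set.Finite.disjoint_toFinset]
    exact hdisj C (hPsfin.mem_toFinset.mp hC) D (hPsfin.mem_toFinset.mp hD) hne
  have hcards : ∀ C ∈ T, (Set.toFinite C).toFinset.card = 4 := by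
    intro C hC
    rw [← Set.ncard_eq_toFinset_card C (Set.toFinite C)]
    exact hcard4 C (hPsfin.mem_toFinset.mp hC)
  have h1 : Fintype.card ((prism m).V) = 4 * T.card := by
    rw [← Finset.card_univ, hU, Finset.card_biUnion hdisjT,
      Finset.sum_congr rfl hcards, Finset.sum_const, smul_eq_mul, mul_comm]
  have h2 : Fintype.card ((prism m).V) = 2 * m := by
    show Fintype.card (Fin m × Fin 2) = 2 * m
    simp [mul_comm]
  exact ⟨T.card, by omega⟩
def isucc (m : ℕ) (i : Fin m) : Fin m :=
  ⟨(i.1 + 1) % m, Nat.mod_lt _ (by have := i.2; omega)⟩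

lemma isucc_val (m : ℕ) (i : Fin m) : (isucc m i).1 = (i.1 + 1) % m := rfl

def cset (m : ℕ) (i : Fin m) : Set (Fin m × Fin 2) :=
  {(i, 0), (isucc m i, 0), (isucc m i, 1), (i, 1)}

lemma mem_cset (m : ℕ) (i : Fin m) (x : Fin m × Fin 2) :
    x ∈ cset m i ↔
      (x.1.1 = i.1 ∧ x.2.1 = 0) ∨ (x.1.1 = (i.1+1) % m ∧ x.2.1 = 0) ∨
      (x.1.1 = (i.1+1) % m ∧ x.2.1 = 1) ∨ (x.1.1 = i.1 ∧ x.2.1 = 1) := by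
  obtain ⟨x1, x2⟩ := x
  simp only [cset, Set.mem_insert_iff, Set.mem_singleton_iff, Prod.ext_iff, Fin.ext_iff,
    isucc_val, Fin.val_zero, Fin.val_one]

lemma mem_cset' (m : ℕ) (i : Fin m) (x1 : Fin m) (x2 : Fin 2) :
    (x1, x2) ∈ cset m i ↔
      (x1.1 = i.1 ∧ x2.1 = 0) ∨ (x1.1 = (i.1+1) % m ∧ x2.1 = 0) ∨
      (x1.1 = (i.1+1) % m ∧ x2.1 = 1) ∨ (x1.1 = i.1 ∧ x2.1 = 1) :=
  mem_cset m i (x1, x2)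

def fset (m : ℕ) : Set ((Fin m × Fin 2) ⊕ Fin m) :=
  Sum.elim (fun p => p.1.1 % 2 = 0) (fun _ => True)

lemma fset_inl (m : ℕ) (p : Fin m × Fin 2) :
    Sum.inl p ∈ fset m ↔ p.1.1 % 2 = 0 := Iff.rfl

lemma fset_inr (m : ℕ) (j : Fin m) : Sum.inr j ∈ fset m := trivial

lemma psucc_eq (m : ℕ) (p : Fin m × Fin 2) : psucc m p = (isucc m p.1, p.2) := rfl

lemma pair_ne (m : ℕ) {x y : Fin m × Fin 2} (h : x.1.1 ≠ y.1.1 ∨ x.2.1 ≠ y.2.1) :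
    x ≠ y := by
  rintro rfl; rcases h with h | h <;> exact h rfl

lemma inl_ne_inr (m : ℕ) (p : Fin m × Fin 2) (j : Fin m) :
    (Sum.inl p : (Fin m × Fin 2) ⊕ Fin m) ≠ Sum.inr j := by simp

lemma inl_ne_inl (m : ℕ) {p q : Fin m × Fin 2} (h : p ≠ q) :
    (Sum.inl p : (Fin m × Fin 2) ⊕ Fin m) ≠ Sum.inl q := by simpa

lemma inr_ne_inr (m : ℕ) {i j : Fin m} (h : i ≠ j) :
    (Sum.inr i : (Fin m × Fin 2) ⊕ Fin m) ≠ Sum.inr j := by simpa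

lemma edgeset_eq (m : ℕ) (hm : 3 ≤ m) (hme : m % 2 = 0) (i : Fin m)
    (hi2 : i.1 % 2 = 0) :
    {e ∈ fset m | (prism m).touches e (cset m i)} =
      ({Sum.inl ((i, 0) : Fin m × Fin 2), Sum.inr (isucc m i),
        Sum.inl ((i, 1) : Fin m × Fin 2), Sum.inr i} :
        Set ((Fin m × Fin 2) ⊕ Fin m)) := by
  have hmi := mod_succ_cases i.1 m i.2
  ext e
  rcases e with ⟨p1, p2⟩ | j
  · have hp2 := p2.2
    have hmp := mod_succ_cases p1.1 m p1.2
    simp only [Set.mem_setOf_eq, fset_inl, prism_touches_inl, mem_cset, psucc_eq,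
      isucc_val, Set.mem_insert_iff, Set.mem_singleton_iff, Sum.inl.injEq,
      reduceCtorEq, Prod.ext_iff, Fin.ext_iff, Fin.val_zero, Fin.val_one, or_false,
      false_or, and_true, and_false, true_and, false_and]
    omega
  · have hmj := mod_succ_cases j.1 m j.2
    simp only [Set.mem_setOf_eq, prism_touches_inr, mem_cset, true_and,
      Set.mem_insert_iff, Set.mem_singleton_iff, Sum.inr.injEq, reduceCtorEq,
      Fin.ext_iff, Fin.val_zero, Fin.val_one, isucc_val, or_false, false_or, and_true, and_false, false_and,
      fset_inr]
    omega

lemma prism_construct (m : ℕ) (hm : 3 ≤ m) (hme : m % 2 = 0) :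
    (prism m).HasCQFactor := by
  refine ⟨fset m, {C | ∃ i : Fin m, i.1 % 2 = 0 ∧ C = cset m i}, ?_, ?_, ?_⟩
  · rintro C ⟨i, hi2, rfl⟩
    have hmi := mod_succ_cases i.1 m i.2
    left
    refine ⟨(i, 0), (isucc m i, 0), (isucc m i, 1), (i, 1),
      pair_ne m (Or.inl (by simp only [isucc_val]; omega)),
      pair_ne m (Or.inl (by simp only [isucc_val]; omega)),
      pair_ne m (Or.inr (by simp)),
      pair_ne m (Or.inr (by simp)),
      pair_ne m (Or.inl (by simp only [isucc_val]; omega)),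
      pair_ne m (Or.inl (by simp only [isucc_val]; omega)),
      rfl,
      Sum.inl (i, 0), Sum.inr (isucc m i), Sum.inl (i, 1), Sum.inr i,
      inl_ne_inr m _ _,
      inl_ne_inl m (pair_ne m (Or.inr (by simp))),
      inl_ne_inr m _ _,
      Ne.symm (inl_ne_inr m _ _),
      inr_ne_inr m (Fin.ne_of_val_ne (by rw [isucc_val]; omega)),
      inl_ne_inr m _ _,
      edgeset_eq m hm hme i hi2, ?_, ?_, ?_, ?_⟩
    · rw [prism_joins_inl]; exact Or.inl ⟨rfl, rfl⟩
    · rw [prism_joins_inr]; exact Or.inl ⟨rfl, rfl⟩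
    · rw [prism_joins_inl]; exact Or.inr ⟨rfl, rfl⟩
    · rw [prism_joins_inr]; exact Or.inr ⟨rfl, rfl⟩
  -- cover
  · rintro ⟨p1, p2⟩
    have hp1 := p1.2
    have hp2 := p2.2
    rcases Nat.mod_two_eq_zero_or_one p1.1 with he | ho
    · exact ⟨cset m p1, ⟨p1, he, rfl⟩, (mem_cset' m p1 p1 p2).mpr (by omega)⟩
    · have hlt : p1.1 - 1 < m := by omega
      have hmm := mod_succ_cases (p1.1 - 1) m hlt
      refine ⟨cset m ⟨p1.1 - 1, hlt⟩, ⟨⟨p1.1 - 1, hlt⟩, by simp only [Fin.val_mk]; omega, rfl⟩,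
        (mem_cset' m ⟨p1.1 - 1, hlt⟩ p1 p2).mpr ?_⟩
      simp only [Fin.val_mk]
      omega
  -- disjointness
  · rintro C ⟨i, hi2, rfl⟩ D ⟨i', hi2', rfl⟩ hne
    apply Set.disjoint_left.mpr
    intro x hx hx'
    apply hne
    have hmi := mod_succ_cases i.1 m i.2
    have hmi' := mod_succ_cases i'.1 m i'.2
    rw [mem_cset] at hx hx'
    have : i = i' := Fin.ext (by omega)
    rw [this]

/-- A prism on `n = 2 * m ≥ 6` vertices (the Cartesian product of
`K₂` with `C_{n/2}`) has a `C₄`-quotient 2-factor if and only if `n` is divisible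
by 4. -/
theorem prism_hasCQFactor_iff (m : ℕ) (hm : 3 ≤ m) :
    (prism m).HasCQFactor ↔ 4 ∣ 2 * m := by
  constructor
  · exact prism_factor_dvd m hm
  · intro h
    exact prism_construct m hm (by omega)
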